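/- arXiv:2405.15200 — 4 statements merged into one kernel-verified Lean document; each statement's English description precedes it below -/
import Mathlib

section
/- Let λ > 0, L > 0, let X_1, …, X_T ∈ ℝ^d satisfy ‖X_t‖ ≤ L for all t, and set V_0 = λ·I_d and V_t = V_{t−1} + X_t X_tᵀ. Then for every constant m with 0 < m ≤ 2, the number of time steps at which the elliptical potential is large satisfies Σ_{t=1}^T 1{ ‖X_t‖²_{V_{t−1}^{−1}} ≥ m } ≤ (6d/m)·log(1 + 2L²/(λm)). -/
open Matrix Finset
open scoped Classical

/-- Euclidean norm of a vector in `ℝ^d`. -/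
noncomputable def enorm2 {d : ℕ} (v : Fin d → ℝ) : ℝ := Real.sqrt (v ⬝ᵥ v)

namespace EPC
variable {d : ℕ}

lemma dot_self_nonneg (x : Fin d → ℝ) : 0 ≤ x ⬝ᵥ x :=
  Finset.sum_nonneg fun i _ => mul_self_nonneg (x i)

lemma vecMulVec_mulVec (x y : Fin d → ℝ) : vecMulVec x x *ᵥ y = (x ⬝ᵥ y) • x := by
  ext i
  simp only [vecMulVec_apply, mulVec, dotProduct, Pi.smul_apply, smul_eq_mul, Finset.sum_mul,
    Finset.mul_sum]
  exact Finset.sum_congr rfl fun j _ => by ring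

lemma posSemidef_vecMulVec (x : Fin d → ℝ) : (vecMulVec x x).PosSemidef := by
  rw [posSemidef_iff_dotProduct_mulVec]
  constructor
  · ext i j
    simp [vecMulVec_apply, conjTranspose_apply, mul_comm]
  · intro y
    rw [vecMulVec_mulVec]
    simp only [star_trivial, dotProduct_smul, smul_eq_mul]
    rw [dotProduct_comm y x]
    exact mul_self_nonneg _

lemma posDef_smul_one {lam : ℝ} (hlam : 0 < lam) :
    (lam • (1 : Matrix (Fin d) (Fin d) ℝ)).PosDef := by
  rw [posDef_iff_dotProduct_mulVec]
  constructor
  · simp [Matrix.IsHermitian, conjTranspose_smul]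
  · intro x hx
    rw [smul_mulVec, one_mulVec, dotProduct_smul, smul_eq_mul]
    exact mul_pos hlam (dotProduct_star_self_pos_iff.mpr hx)

lemma trace_vecMulVec (x : Fin d → ℝ) : (vecMulVec x x).trace = x ⬝ᵥ x := by
  simp [Matrix.trace, vecMulVec_apply, dotProduct, Matrix.diag]

lemma dot_mulVec_symm {A : Matrix (Fin d) (Fin d) ℝ} (hA : A.IsHermitian)
    (x y : Fin d → ℝ) : x ⬝ᵥ A *ᵥ y = (A *ᵥ x) ⬝ᵥ y := by
  rw [Matrix.dotProduct_mulVec, ← Matrix.mulVec_transpose]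
  have : Aᵀ = A := by
    have := hA
    rwa [Matrix.IsHermitian, conjTranspose_eq_transpose_of_trivial] at this
  rw [this]

lemma quad_lower {A : Matrix (Fin d) (Fin d) ℝ} (hA : A.PosDef) (x y : Fin d → ℝ) :
    2 * (y ⬝ᵥ x) - y ⬝ᵥ A *ᵥ y ≤ x ⬝ᵥ A⁻¹ *ᵥ x := by
  set w := A⁻¹ *ᵥ x with hw
  have hAw : A *ᵥ w = x := by
    rw [hw, Matrix.mulVec_mulVec, Matrix.mul_nonsing_inv _ (isUnit_iff_ne_zero.2 hA.det_pos.ne'),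
      one_mulVec]
  have h0 : 0 ≤ (y - w) ⬝ᵥ A *ᵥ (y - w) := by
    simpa using hA.posSemidef.dotProduct_mulVec_nonneg (y - w)
  have expand : (y - w) ⬝ᵥ A *ᵥ (y - w)
      = y ⬝ᵥ A *ᵥ y - 2 * (y ⬝ᵥ x) + x ⬝ᵥ A⁻¹ *ᵥ x := by
    rw [Matrix.mulVec_sub, dotProduct_sub, sub_dotProduct, sub_dotProduct]
    rw [show w ⬝ᵥ A *ᵥ y = x ⬝ᵥ y by rw [dot_mulVec_symm hA.isHermitian w y, hAw]]
    rw [hAw]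
    rw [show y ⬝ᵥ x = x ⬝ᵥ y from dotProduct_comm y x,
        show w ⬝ᵥ x = x ⬝ᵥ w from dotProduct_comm w x]
    ring
  linarith

lemma inv_quad_mono {A B : Matrix (Fin d) (Fin d) ℝ} (hA : A.PosDef) (hB : B.PosDef)
    (hAB : (B - A).PosSemidef) (x : Fin d → ℝ) :
    x ⬝ᵥ B⁻¹ *ᵥ x ≤ x ⬝ᵥ A⁻¹ *ᵥ x := by
  set y := B⁻¹ *ᵥ x with hy
  have hBy : B *ᵥ y = x := by
    rw [hy, Matrix.mulVec_mulVec, Matrix.mul_nonsing_inv _ (isUnit_iff_ne_zero.2 hB.det_pos.ne'),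
      one_mulVec]
  have h1 : y ⬝ᵥ B *ᵥ y = y ⬝ᵥ x := by rw [hBy]
  have h2 : y ⬝ᵥ x = x ⬝ᵥ B⁻¹ *ᵥ x := by rw [hy, dotProduct_comm]
  have h3 : y ⬝ᵥ A *ᵥ y ≤ y ⬝ᵥ B *ᵥ y := by
    have := hAB.dotProduct_mulVec_nonneg y
    simp only [star_trivial, Matrix.sub_mulVec, dotProduct_sub] at this
    linarith
  have h4 := quad_lower hA x y
  linarith

lemma det_add_vecMulVec {A : Matrix (Fin d) (Fin d) ℝ} (hA : A.PosDef) (x : Fin d → ℝ) :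
    (A + vecMulVec x x).det = A.det * (1 + x ⬝ᵥ A⁻¹ *ᵥ x) := by
  have hdet : IsUnit A.det := isUnit_iff_ne_zero.2 hA.det_pos.ne'
  rw [vecMulVec_eq (Fin 1), Matrix.det_add_replicateCol_mul_replicateRow hdet]
  congr 1
  rw [@Matrix.det_unique _ _ _ _ (fun a b => decidableEq_of_subsingleton a b) _]
  show (1 : Matrix (Fin 1) (Fin 1) ℝ) default default
      + (replicateRow (Fin 1) x * A⁻¹ * replicateCol (Fin 1) x) default default = _
  rw [Matrix.one_apply_eq]
  congr 1
  rw [Matrix.mul_apply]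
  simp only [Matrix.mul_apply, Matrix.replicateRow_apply, Matrix.replicateCol_apply, mulVec, dotProduct,
    Finset.sum_mul, Finset.mul_sum]
  have hsymm : ∀ i j, A⁻¹ j i = A⁻¹ i j := fun i j => by
    conv_lhs => rw [← hA.posSemidef.inv.1]
    simp [conjTranspose_apply]
  exact Finset.sum_congr rfl fun i _ => Finset.sum_congr rfl fun j _ => by
    rw [hsymm j i]; ring

lemma det_le_trace_div_pow {A : Matrix (Fin d) (Fin d) ℝ} (hA : A.PosSemidef) (hd : 0 < d) :
    A.det ≤ (A.trace / d) ^ d := by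
  have hH : A.IsHermitian := hA.1
  set μ := hH.eigenvalues with hμ
  have hμ0 : ∀ i, 0 ≤ μ i := hA.eigenvalues_nonneg
  have hdet : A.det = ∏ i, μ i := by
    simpa using hH.det_eq_prod_eigenvalues
  have htr : A.trace = ∑ i, μ i := by
    simpa using hH.trace_eq_sum_eigenvalues
  have hAM : ∏ i, μ i ^ ((d : ℝ)⁻¹) ≤ ∑ i, (d : ℝ)⁻¹ * μ i := by
    apply Real.geom_mean_le_arith_mean_weighted
    · intro i _; positivity
    · simp [Finset.card_univ]
      field_simp
    · intro i _; exact hμ0 i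
  have hg0 : 0 ≤ ∏ i, μ i ^ ((d : ℝ)⁻¹) :=
    Finset.prod_nonneg fun i _ => Real.rpow_nonneg (hμ0 i) _
  have hpow : (∏ i, μ i ^ ((d : ℝ)⁻¹)) ^ d = ∏ i, μ i := by
    rw [← Finset.prod_pow]
    refine Finset.prod_congr rfl fun i _ => ?_
    rw [← Real.rpow_natCast (μ i ^ ((d : ℝ)⁻¹)) d, ← Real.rpow_mul (hμ0 i),
      inv_mul_cancel₀ (by exact_mod_cast hd.ne'), Real.rpow_one]
  have hsum : ∑ i, (d : ℝ)⁻¹ * μ i = A.trace / d := by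
    rw [htr, Finset.sum_div]
    exact Finset.sum_congr rfl fun i _ => by rw [div_eq_inv_mul]
  calc A.det = (∏ i, μ i ^ ((d : ℝ)⁻¹)) ^ d := by rw [hpow, hdet]
    _ ≤ (∑ i, (d : ℝ)⁻¹ * μ i) ^ d := pow_le_pow_left₀ hg0 hAM d
    _ = (A.trace / d) ^ d := by rw [hsum]

/-- Auxiliary recursion: the design matrix built only from selected rounds. -/
noncomputable def Wseq (d : ℕ) (lam : ℝ) (X : ℕ → Fin d → ℝ) (S : Finset ℕ) :
    ℕ → Matrix (Fin d) (Fin d) ℝ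
  | 0 => lam • 1
  | (t + 1) => Wseq d lam X S t +
      (if t + 1 ∈ S then vecMulVec (X (t + 1)) (X (t + 1)) else 0)

end EPC
set_option maxHeartbeats 1000000 in
/-- **Elliptical potential count lemma.** Let `λ, L > 0`, `‖X_t‖ ≤ L` for all `t ∈ [1, T]`,
`V_0 = λ·I_d` and `V_t = V_{t−1} + X_t X_tᵀ`. Then for every `0 < m ≤ 2`,
`Σ_{t=1}^T 1{‖X_t‖²_{V_{t−1}⁻¹} ≥ m} ≤ (6d/m)·log(1 + 2L²/(λm))`. -/
theorem elliptical_potential_count (d T : ℕ) (lam L : ℝ) (hlam : 0 < lam) (hL : 0 < L)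
    (X : ℕ → Fin d → ℝ) (hX : ∀ t ∈ Finset.Icc 1 T, enorm2 (X t) ≤ L)
    (V : ℕ → Matrix (Fin d) (Fin d) ℝ)
    (hV0 : V 0 = lam • (1 : Matrix (Fin d) (Fin d) ℝ))
    (hV : ∀ t, V (t + 1) = V t + Matrix.vecMulVec (X (t + 1)) (X (t + 1)))
    (m : ℝ) (hm0 : 0 < m) (hm2 : m ≤ 2) :
    ∑ t ∈ Finset.Icc 1 T,
        (if m ≤ X t ⬝ᵥ (V (t - 1))⁻¹.mulVec (X t) then (1 : ℝ) else 0)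
      ≤ (6 * d / m) * Real.log (1 + 2 * L ^ 2 / (lam * m)) := by
  -- norm bound in squared form
  have hXsq : ∀ t ∈ Finset.Icc 1 T, X t ⬝ᵥ X t ≤ L ^ 2 := by
    intro t ht
    have h1 : X t ⬝ᵥ X t = enorm2 (X t) ^ 2 :=
      (Real.sq_sqrt (EPC.dot_self_nonneg (X t))).symm
    rw [h1]
    exact pow_le_pow_left₀ (Real.sqrt_nonneg _) (hX t ht) 2
  -- positivity of the RHS logarithm argument
  have hargpos : (0 : ℝ) ≤ 2 * L ^ 2 / (lam * m) := by positivity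
  have hRHS0 : (0 : ℝ) ≤ (6 * d / m) * Real.log (1 + 2 * L ^ 2 / (lam * m)) := by
    have := Real.log_nonneg (by linarith : (1 : ℝ) ≤ 1 + 2 * L ^ 2 / (lam * m))
    positivity
  -- the sum equals the cardinality of the "large" set
  have hsum : ∑ t ∈ Finset.Icc 1 T,
        (if m ≤ X t ⬝ᵥ (V (t - 1))⁻¹.mulVec (X t) then (1 : ℝ) else 0)
      = (((Finset.Icc 1 T).filter
          (fun t => m ≤ X t ⬝ᵥ (V (t - 1))⁻¹.mulVec (X t))).card : ℝ) :=
    Finset.sum_boole _ _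
  rw [hsum]
  set S := (Finset.Icc 1 T).filter
      (fun t => m ≤ X t ⬝ᵥ (V (t - 1))⁻¹.mulVec (X t)) with hSdef
  -- basic facts about V
  have hVpd : ∀ t, (V t).PosDef := by
    intro t
    induction t with
    | zero => rw [hV0]; exact EPC.posDef_smul_one hlam
    | succ t ih => rw [hV t]; exact ih.add_posSemidef (EPC.posSemidef_vecMulVec _)
  have hVmono : ∀ t, (V t - V 0).PosSemidef := by
    intro t
    induction t with
    | zero => rw [sub_self]; exact Matrix.PosSemidef.zero
    | succ t ih =>
        have : V (t + 1) - V 0 = (V t - V 0) + vecMulVec (X (t + 1)) (X (t + 1)) := by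
          rw [hV t]; abel
        rw [this]
        exact ih.add (EPC.posSemidef_vecMulVec _)
  -- trivial case d = 0
  rcases Nat.eq_zero_or_pos d with hd0 | hd
  · subst hd0
    have : (S.card : ℝ) = 0 := by
      rw [hSdef]
      norm_cast
      rw [Finset.card_eq_zero]
      apply Finset.filter_false_of_mem
      intro t _
      have : X t ⬝ᵥ (V (t - 1))⁻¹.mulVec (X t) = 0 := by
        simp [dotProduct]
      rw [this]
      exact not_le.mpr hm0
    rw [this]; exact hRHS0
  -- case of small feature norms: the set is empty
  by_cases hsmall : L ^ 2 < lam * m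
  · have hempty : S = ∅ := by
      rw [hSdef, Finset.filter_false_of_mem]
      intro t ht
      apply not_le.mpr
      have hmono := EPC.inv_quad_mono (A := V 0) (B := V (t - 1)) (hVpd 0) (hVpd (t - 1))
        (hVmono (t - 1)) (X t)
      have hV0inv : (V 0)⁻¹ = lam⁻¹ • (1 : Matrix (Fin d) (Fin d) ℝ) := by
        rw [hV0]
        apply Matrix.inv_eq_right_inv
        rw [Matrix.smul_mul, Matrix.mul_smul, Matrix.one_mul, smul_smul,
          mul_inv_cancel₀ hlam.ne', one_smul]
      have hx0 : X t ⬝ᵥ (V 0)⁻¹ *ᵥ X t = lam⁻¹ * (X t ⬝ᵥ X t) := by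
        rw [hV0inv, smul_mulVec, one_mulVec, dotProduct_smul, smul_eq_mul]
      have hxL : lam⁻¹ * (X t ⬝ᵥ X t) ≤ L ^ 2 / lam := by
        rw [div_eq_inv_mul]
        exact mul_le_mul_of_nonneg_left (hXsq t ht) (by positivity)
      have : L ^ 2 / lam < m := by
        rw [div_lt_iff₀ hlam]
        nlinarith
      calc X t ⬝ᵥ (V (t - 1))⁻¹.mulVec (X t) ≤ X t ⬝ᵥ (V 0)⁻¹ *ᵥ X t := hmono
        _ = lam⁻¹ * (X t ⬝ᵥ X t) := hx0
        _ ≤ L ^ 2 / lam := hxL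
        _ < m := this
    rw [hempty]
    simpa using hRHS0
  push_neg at hsmall
  -- the selected-rounds matrix W
  set W := EPC.Wseq d lam X S with hWdef
  have hW0 : W 0 = lam • 1 := rfl
  have hWsucc : ∀ t, W (t + 1) = W t +
      (if t + 1 ∈ S then vecMulVec (X (t + 1)) (X (t + 1)) else 0) := fun t => rfl
  have hS_mem : ∀ s ∈ S, s ∈ Finset.Icc 1 T ∧ m ≤ X s ⬝ᵥ (V (s - 1))⁻¹.mulVec (X s) := by
    intro s hs
    rw [hSdef, Finset.mem_filter] at hs
    exact hs
  have hWpd : ∀ t, (W t).PosDef := by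
    intro t
    induction t with
    | zero => rw [hW0]; exact EPC.posDef_smul_one hlam
    | succ t ih =>
        rw [hWsucc t]
        refine ih.add_posSemidef ?_
        split
        · exact EPC.posSemidef_vecMulVec _
        · exact Matrix.PosSemidef.zero
  have hVW : ∀ t, (V t - W t).PosSemidef := by
    intro t
    induction t with
    | zero => rw [hW0, hV0, sub_self]; exact Matrix.PosSemidef.zero
    | succ t ih =>
        by_cases h : t + 1 ∈ S
        · have : V (t + 1) - W (t + 1) = V t - W t := by
            rw [hWsucc t, hV t, if_pos h]; abel
          rw [this]; exact ih
        · have : V (t + 1) - W (t + 1) = (V t - W t) + vecMulVec (X (t + 1)) (X (t + 1)) := by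
            rw [hWsucc t, hV t, if_neg h]; abel
          rw [this]; exact ih.add (EPC.posSemidef_vecMulVec _)
  -- lower bound on the quadratic form w.r.t. W at selected rounds
  have hm_le : ∀ t, t + 1 ∈ S → m ≤ X (t + 1) ⬝ᵥ (W t)⁻¹ *ᵥ X (t + 1) := by
    intro t ht
    have h1 := (hS_mem _ ht).2
    simp only [Nat.add_sub_cancel] at h1
    exact h1.trans (EPC.inv_quad_mono (hWpd t) (hVpd t) (hVW t) (X (t + 1)))
  -- cardinality bookkeeping
  have hfilt_succ_mem : ∀ t, t + 1 ∈ S →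
      S.filter (fun s => s ≤ t + 1) = insert (t + 1) (S.filter (fun s => s ≤ t)) := by
    intro t ht
    ext s
    simp only [Finset.mem_filter, Finset.mem_insert]
    constructor
    · rintro ⟨hs, hle⟩
      rcases Nat.lt_or_ge s (t + 1) with h | h
      · exact Or.inr ⟨hs, Nat.lt_succ_iff.mp h⟩
      · exact Or.inl (le_antisymm hle h)
    · rintro (rfl | ⟨hs, hle⟩)
      · exact ⟨ht, le_rfl⟩
      · exact ⟨hs, hle.trans (Nat.le_succ t)⟩
  have hfilt_succ_not : ∀ t, t + 1 ∉ S →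
      S.filter (fun s => s ≤ t + 1) = S.filter (fun s => s ≤ t) := by
    intro t ht
    ext s
    simp only [Finset.mem_filter]
    constructor
    · rintro ⟨hs, hle⟩
      refine ⟨hs, ?_⟩
      rcases Nat.lt_or_ge s (t + 1) with h | h
      · exact Nat.lt_succ_iff.mp h
      · exact absurd (le_antisymm hle h ▸ hs) ht
    · rintro ⟨hs, hle⟩
      exact ⟨hs, hle.trans (Nat.le_succ t)⟩
  have hfilt0 : S.filter (fun s => s ≤ 0) = ∅ := by
    rw [Finset.filter_false_of_mem]
    intro s hs
    have := (hS_mem s hs).1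
    rw [Finset.mem_Icc] at this
    omega
  -- determinant lower bound
  have hdetW : ∀ t, lam ^ d * (1 + m) ^ ((S.filter (fun s => s ≤ t)).card) ≤ (W t).det := by
    intro t
    induction t with
    | zero =>
        rw [hfilt0, hW0]
        simp [Matrix.det_smul]
    | succ t ih =>
        by_cases h : t + 1 ∈ S
        · have hcard : (S.filter (fun s => s ≤ t + 1)).card
              = (S.filter (fun s => s ≤ t)).card + 1 := by
            rw [hfilt_succ_mem t h, Finset.card_insert_of_notMem]
            simp only [Finset.mem_filter]
            omega
          rw [hcard, hWsucc t, if_pos h, EPC.det_add_vecMulVec (hWpd t)]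
          rw [pow_succ, ← mul_assoc]
          have h1m : (0 : ℝ) ≤ 1 + m := by linarith
          have hq := hm_le t h
          have hdetpos := (hWpd t).det_pos
          have hfac : (1 : ℝ) + m ≤ 1 + X (t + 1) ⬝ᵥ (W t)⁻¹ *ᵥ X (t + 1) := by linarith
          exact mul_le_mul ih hfac h1m hdetpos.le
        · rw [hfilt_succ_not t h, hWsucc t, if_neg h, add_zero]
          exact ih
  -- trace upper bound
  have htrW : ∀ t, (W t).trace
      = d * lam + ∑ s ∈ S.filter (fun s => s ≤ t), (X s ⬝ᵥ X s) := by
    intro t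
    induction t with
    | zero =>
        rw [hfilt0, hW0]
        simp [Matrix.trace_smul, Matrix.trace_one, mul_comm]
    | succ t ih =>
        by_cases h : t + 1 ∈ S
        · rw [hWsucc t, if_pos h, Matrix.trace_add, EPC.trace_vecMulVec, ih,
            hfilt_succ_mem t h, Finset.sum_insert (by simp only [Finset.mem_filter]; omega)]
          ring
        · rw [hWsucc t, if_neg h, add_zero, ih, hfilt_succ_not t h]
  -- specialize at t = T
  have hfiltT : S.filter (fun s => s ≤ T) = S := by
    apply Finset.filter_true_of_mem
    intro s hs
    have := (hS_mem s hs).1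
    rw [Finset.mem_Icc] at this
    exact this.2
  set k : ℝ := (S.card : ℝ) with hk
  have hk0 : 0 ≤ k := Nat.cast_nonneg _
  have hd1 : (1 : ℝ) ≤ (d : ℝ) := by exact_mod_cast hd
  have hdpos : (0 : ℝ) < d := by linarith
  have htrT : (W T).trace ≤ d * lam + k * L ^ 2 := by
    rw [htrW T, hfiltT]
    have : ∑ s ∈ S, (X s ⬝ᵥ X s) ≤ S.card • (L ^ 2) := by
      apply Finset.sum_le_card_nsmul
      intro s hs
      exact hXsq s (hS_mem s hs).1
    rw [nsmul_eq_mul] at this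
    linarith
  have htrT0 : 0 ≤ (W T).trace := by
    rw [htrW T, hfiltT]
    have : 0 ≤ ∑ s ∈ S, (X s ⬝ᵥ X s) :=
      Finset.sum_nonneg fun s _ => EPC.dot_self_nonneg _
    nlinarith
  have hdetT : lam ^ d * (1 + m) ^ S.card ≤ (W T).det := by
    have := hdetW T; rwa [hfiltT] at this
  have hdet_ub : (W T).det ≤ ((d * lam + k * L ^ 2) / d) ^ d := by
    calc (W T).det ≤ ((W T).trace / d) ^ d :=
          EPC.det_le_trace_div_pow (hWpd T).posSemidef hd
      _ ≤ ((d * lam + k * L ^ 2) / d) ^ d := by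
          apply pow_le_pow_left₀ (div_nonneg htrT0 hdpos.le)
          gcongr
  -- take logarithms
  have hQpos : (0 : ℝ) < (d * lam + k * L ^ 2) / d := by
    have : (0 : ℝ) < d * lam := by positivity
    have hkL : 0 ≤ k * L ^ 2 := by positivity
    positivity
  have hlhspos : (0 : ℝ) < lam ^ d * (1 + m) ^ S.card := by positivity
  have hlog1 : Real.log (lam ^ d * (1 + m) ^ S.card)
      ≤ Real.log (((d * lam + k * L ^ 2) / d) ^ d) := by
    rw [Real.log_le_log_iff hlhspos (by positivity)]
    exact hdetT.trans hdet_ub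
  rw [Real.log_mul (by positivity) (by positivity), Real.log_pow, Real.log_pow,
    Real.log_pow, ← hk] at hlog1
  -- rewrite to the standard form
  have hQl : ((d * lam + k * L ^ 2) / d) / lam = 1 + k * L ^ 2 / (d * lam) := by
    field_simp
  have hlog2 : k * Real.log (1 + m) ≤ d * Real.log (1 + k * L ^ 2 / (d * lam)) := by
    rw [← hQl, Real.log_div hQpos.ne' hlam.ne']
    linarith [hlog1]
  clear_value k
  clear * - hlog2 hk0 hd1 hdpos hlam hL hm0 hm2 hsmall
  -- scalar computations
  set r : ℝ := 2 * L ^ 2 / (lam * m) with hr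
  have hr2 : (2 : ℝ) ≤ r := by
    rw [hr, le_div_iff₀ (by positivity)]
    nlinarith
  set C : ℝ := Real.log (1 + r) with hC
  have hC1 : (1 : ℝ) ≤ C := by
    have h3 : (1 : ℝ) ≤ Real.log 3 := by
      rw [Real.le_log_iff_exp_le (by norm_num)]
      have := Real.exp_one_lt_d9
      linarith
    have : Real.log 3 ≤ C := by
      rw [hC, Real.log_le_log_iff (by norm_num) (by linarith)]
      linarith
    linarith
  set u : ℝ := k * m / (2 * d) with hu
  have hu0 : 0 ≤ u := by positivity
  have hexp : k * L ^ 2 / (d * lam) = u * r := by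
    rw [hu, hr]
    field_simp
  have hlog_split : Real.log (1 + u * r) ≤ Real.log (1 + u) + C := by
    have hur : (1 : ℝ) + u * r ≤ (1 + u) * (1 + r) := by nlinarith
    calc Real.log (1 + u * r) ≤ Real.log ((1 + u) * (1 + r)) := by
          rw [Real.log_le_log_iff (by nlinarith) (by nlinarith)]
          exact hur
      _ = Real.log (1 + u) + C := Real.log_mul (by nlinarith) (by nlinarith)
  have hlogu : Real.log (1 + u) ≤ u / 4 + (2 * Real.log 2 - 3 / 4) := by
    have h4 : Real.log ((1 + u) / 4) ≤ (1 + u) / 4 - 1 :=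
      Real.log_le_sub_one_of_pos (by positivity)
    rw [Real.log_div (by positivity) (by norm_num)] at h4
    have h42 : Real.log 4 = 2 * Real.log 2 := by
      rw [show (4 : ℝ) = 2 ^ 2 by norm_num, Real.log_pow]
      push_cast; ring
    linarith
  have hmlog : m / 2 ≤ Real.log (1 + m) := by
    have h3 : (1 : ℝ) ≤ Real.log 3 := by
      rw [Real.le_log_iff_exp_le (by norm_num)]
      have := Real.exp_one_lt_d9
      linarith
    have hcav := (strictConcaveOn_log_Ioi.concaveOn).2 (Set.mem_Ioi.mpr one_pos)
      (Set.mem_Ioi.mpr (by norm_num : (0 : ℝ) < 3))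
      (by linarith : (0 : ℝ) ≤ 1 - m / 2) (by linarith : (0 : ℝ) ≤ m / 2) (by ring)
    rw [show (1 - m / 2) • (1 : ℝ) + (m / 2) • (3 : ℝ) = 1 + m by
      simp only [smul_eq_mul]; ring] at hcav
    simp only [smul_eq_mul, Real.log_one, mul_zero, zero_add] at hcav
    nlinarith
  -- combine everything
  have hlog2' : k * (m / 2) ≤ d * (u / 4 + (2 * Real.log 2 - 3 / 4) + C) := by
    have s1 : k * (m / 2) ≤ k * Real.log (1 + m) :=
      mul_le_mul_of_nonneg_left hmlog hk0
    have s2 : d * Real.log (1 + k * L ^ 2 / (d * lam))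
        ≤ d * (Real.log (1 + u) + C) := by
      rw [hexp]
      exact mul_le_mul_of_nonneg_left hlog_split (by positivity)
    have s3 : d * (Real.log (1 + u) + C) ≤ d * (u / 4 + (2 * Real.log 2 - 3 / 4) + C) := by
      apply mul_le_mul_of_nonneg_left (by linarith) (by positivity)
    linarith
  have hdu : (d : ℝ) * u = k * m / 2 := by
    rw [hu]
    field_simp
  have hlog2'' : k * m * (3 / 8) ≤ d * ((2 * Real.log 2 - 3 / 4) + C) := by
    nlinarith [hlog2']
  have hlogtwo := Real.log_two_lt_d9
  have hkm : k * m ≤ 6 * d * C := by nlinarith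
  rw [div_mul_eq_mul_div, le_div_iff₀ hm0]
  exact hkm
end

section
/- Deterministic peeling bound. Let d, T ≥ 1, λ > 0, L > 0, let X_1, …, X_T ∈ ℝ^d satisfy ‖X_t‖ ≤ L, and set V_0 = λ·I_d, V_t = V_{t−1} + X_t X_tᵀ. Let Δ_1, …, Δ_T ∈ [0,1] and let β_0 ≤ β_1 ≤ … ≤ β_{T−1} be real numbers with β_0 ≥ 1; write β := β_{T−1}. Then for every Γ ∈ (0,1): Σ_{t=1}^T Δ_t·1{ ‖X_t‖²_{V_{t−1}^{−1}} ≥ Δ_t²/β_{t−1} } ≤ T·Γ + (48·d·β/Γ)·log(1 + 8·L²·β/(λ·Γ²)). -/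
open Matrix Finset
open scoped Classical

section MatrixAux
variable {d : ℕ}

lemma vecMulVec_mulVec' (v w x : Fin d → ℝ) :
    (Matrix.vecMulVec v w) *ᵥ x = (w ⬝ᵥ x) • v := by
  ext i
  simp only [Matrix.mulVec, Matrix.vecMulVec_apply, dotProduct, Pi.smul_apply, smul_eq_mul]
  rw [Finset.sum_mul]
  exact Finset.sum_congr rfl fun j _ => by ring

lemma posSemidef_vecMulVec (v : Fin d → ℝ) : (Matrix.vecMulVec v v).PosSemidef := by
  refine Matrix.PosSemidef.of_dotProduct_mulVec_nonneg ?_ ?_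
  · rw [Matrix.IsHermitian]
    ext i j
    simp [Matrix.conjTranspose_apply, Matrix.vecMulVec_apply, mul_comm]
  · intro x
    rw [vecMulVec_mulVec']
    simp only [star_trivial, dotProduct_smul]
    rw [smul_eq_mul, dotProduct_comm]
    exact mul_self_nonneg _

lemma trace_vecMulVec' (v : Fin d → ℝ) : (Matrix.vecMulVec v v).trace = v ⬝ᵥ v := by
  simp [Matrix.trace, Matrix.diag, Matrix.vecMulVec_apply, dotProduct]

lemma psd_quad_nonneg {M : Matrix (Fin d) (Fin d) ℝ} (hM : M.PosSemidef) (x : Fin d → ℝ) :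
    0 ≤ x ⬝ᵥ M *ᵥ x := by
  simpa using hM.dotProduct_mulVec_nonneg x

/-- Antitonicity of the inverse quadratic form. -/
lemma quad_inv_antitone {U V : Matrix (Fin d) (Fin d) ℝ} (hU : U.PosDef) (hV : V.PosDef)
    (hUV : (V - U).PosSemidef) (x : Fin d → ℝ) :
    x ⬝ᵥ V⁻¹ *ᵥ x ≤ x ⬝ᵥ U⁻¹ *ᵥ x := by
  have hUdet : IsUnit U.det := hU.det_pos.ne'.isUnit
  have hVdet : IsUnit V.det := hV.det_pos.ne'.isUnit
  set y := V⁻¹ *ᵥ x with hy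
  set z := U⁻¹ *ᵥ x with hz
  have hVy : V *ᵥ y = x := by
    rw [hy, Matrix.mulVec_mulVec, Matrix.mul_nonsing_inv _ hVdet, Matrix.one_mulVec]
  have hUz : U *ᵥ z = x := by
    rw [hz, Matrix.mulVec_mulVec, Matrix.mul_nonsing_inv _ hUdet, Matrix.one_mulVec]
  -- symmetric dot product transfers
  have hsymm : ∀ (M : Matrix (Fin d) (Fin d) ℝ), M.IsHermitian → ∀ a b : Fin d → ℝ,
      a ⬝ᵥ M *ᵥ b = (M *ᵥ a) ⬝ᵥ b := by
    intro M hM a b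
    rw [Matrix.dotProduct_mulVec, ← Matrix.mulVec_transpose]
    congr 1
    rw [show Mᵀ = M from by simpa [Matrix.IsHermitian] using hM]
  have h1 : x ⬝ᵥ V⁻¹ *ᵥ x = y ⬝ᵥ x := by rw [← hy, dotProduct_comm]
  have h2 : x ⬝ᵥ U⁻¹ *ᵥ x = z ⬝ᵥ x := by rw [← hz, dotProduct_comm]
  have hyVy : y ⬝ᵥ V *ᵥ y = y ⬝ᵥ x := by rw [hVy]
  have hyUz : y ⬝ᵥ U *ᵥ z = y ⬝ᵥ x := by rw [hUz]
  have hzUy : z ⬝ᵥ U *ᵥ y = x ⬝ᵥ y := by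
    rw [hsymm U hU.isHermitian, hUz]
  have hzUz : z ⬝ᵥ U *ᵥ z = z ⬝ᵥ x := by rw [hUz]
  have hq1 : 0 ≤ y ⬝ᵥ (V - U) *ᵥ y := psd_quad_nonneg hUV y
  have hq2 : 0 ≤ (y - z) ⬝ᵥ U *ᵥ (y - z) := psd_quad_nonneg hU.posSemidef (y - z)
  have e1 : y ⬝ᵥ (V - U) *ᵥ y = y ⬝ᵥ V *ᵥ y - y ⬝ᵥ U *ᵥ y := by
    rw [Matrix.sub_mulVec, dotProduct_sub]
  have e2 : (y - z) ⬝ᵥ U *ᵥ (y - z)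
      = y ⬝ᵥ U *ᵥ y - y ⬝ᵥ U *ᵥ z - z ⬝ᵥ U *ᵥ y + z ⬝ᵥ U *ᵥ z := by
    simp only [Matrix.mulVec_sub, sub_dotProduct, dotProduct_sub]
    ring
  have hxy : x ⬝ᵥ y = y ⬝ᵥ x := dotProduct_comm _ _
  rw [h1, h2]
  nlinarith [hq1, hq2, e1, e2]

end MatrixAux

section Det
variable {d : ℕ}

/-- Matrix determinant lemma for rank-one update. -/
lemma det_add_vecMulVec {A : Matrix (Fin d) (Fin d) ℝ} (hA : IsUnit A.det) (v : Fin d → ℝ) :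
    (A + Matrix.vecMulVec v v).det = A.det * (1 + v ⬝ᵥ A⁻¹ *ᵥ v) := by
  rw [Matrix.vecMulVec_eq Unit, Matrix.det_add_replicateCol_mul_replicateRow hA, Matrix.mul_assoc]
  congr 1
  rw [Matrix.det_unique]
  simp only [Matrix.add_apply, Matrix.one_apply_eq, Matrix.mul_apply, Matrix.replicateRow_apply,
    Matrix.replicateCol_apply, Matrix.mulVec, dotProduct]

lemma trace_eq_sum_eigenvalues {A : Matrix (Fin d) (Fin d) ℝ} (hA : A.IsHermitian) :
    A.trace = ∑ i, hA.eigenvalues i := by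
  simpa using hA.trace_eq_sum_eigenvalues

lemma det_le_trace_div_pow {A : Matrix (Fin d) (Fin d) ℝ} (hd : 0 < d) (hA : A.PosSemidef) :
    A.det ≤ (A.trace / d) ^ d := by
  have herm := hA.isHermitian
  have hev : ∀ i, 0 ≤ herm.eigenvalues i := fun i => hA.eigenvalues_nonneg i
  have hdet : A.det = ∏ i, herm.eigenvalues i := by
    rw [herm.det_eq_prod_eigenvalues]
    norm_num
  have htr : A.trace = ∑ i, herm.eigenvalues i := trace_eq_sum_eigenvalues herm
  have hdR : (0:ℝ) < d := by exact_mod_cast hd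
  have amgm := Real.geom_mean_le_arith_mean_weighted Finset.univ
      (fun _ : Fin d => 1 / d) (fun i => herm.eigenvalues i)
      (fun i _ => by positivity)
      (by simp [Finset.card_univ]; field_simp)
      (fun i _ => hev i)
  have hbase : (0:ℝ) ≤ ∏ i, herm.eigenvalues i ^ ((1:ℝ) / d) :=
    Finset.prod_nonneg fun i _ => Real.rpow_nonneg (hev i) _
  have key : (∏ i, herm.eigenvalues i ^ ((1:ℝ) / d)) ^ d = ∏ i, herm.eigenvalues i := by
    rw [← Finset.prod_pow]
    refine Finset.prod_congr rfl fun i _ => ?_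
    rw [← Real.rpow_natCast (herm.eigenvalues i ^ ((1:ℝ)/d)) d, ← Real.rpow_mul (hev i)]
    rw [one_div, inv_mul_cancel₀ hdR.ne', Real.rpow_one]
  calc A.det = (∏ i, herm.eigenvalues i ^ ((1:ℝ) / d)) ^ d := by rw [hdet, key]
    _ ≤ (A.trace / d) ^ d := by
        apply pow_le_pow_left₀ hbase
        calc (∏ i, herm.eigenvalues i ^ ((1:ℝ) / d))
            ≤ ∑ i, (1/(d:ℝ)) * herm.eigenvalues i := amgm
          _ = A.trace / d := by
              rw [htr, Finset.sum_div]
              exact Finset.sum_congr rfl fun i _ => by ring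

end Det

section Scalar

lemma half_le_log_one_add {b : ℝ} (hb0 : 0 < b) (hb1 : b ≤ 1) : b / 2 ≤ Real.log (1 + b) := by
  have h1 : Real.log (1 + b)⁻¹ ≤ (1 + b)⁻¹ - 1 := Real.log_le_sub_one_of_pos (by positivity)
  rw [Real.log_inv] at h1
  have e : (1 + b)⁻¹ - 1 = -(b / (1 + b)) := by field_simp; ring
  rw [e] at h1
  have h2 : b / (1 + b) ≤ Real.log (1 + b) := by linarith
  have h3 : b / 2 ≤ b / (1 + b) := by
    rw [div_le_div_iff₀ (by norm_num) (by positivity)]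
    nlinarith
  linarith

lemma one_le_log_one_add {u : ℝ} (hu : 2 ≤ u) : 1 ≤ Real.log (1 + u) := by
  rw [Real.le_log_iff_exp_le (by linarith)]
  have := Real.exp_one_lt_d9
  linarith

set_option maxHeartbeats 1000000 in
lemma scalar_count {dR L lam b m : ℝ} (hd : 1 ≤ dR) (hlam : 0 < lam) (hL : 0 < L)
    (hb0 : 0 < b) (hb1 : b ≤ 1) (hbL : lam * b ≤ L ^ 2) (hm0 : 0 ≤ m)
    (h : m * Real.log (1 + b) ≤ dR * Real.log (1 + m * L ^ 2 / (dR * lam))) :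
    m ≤ (6 * dR / b) * Real.log (1 + 2 * L ^ 2 / (lam * b)) := by
  have hdR : (0:ℝ) < dR := by linarith
  obtain ⟨a, ha⟩ : ∃ a : ℝ, a = L ^ 2 / (dR * lam) := ⟨_, rfl⟩
  obtain ⟨u, hu⟩ : ∃ u : ℝ, u = 2 * L ^ 2 / (lam * b) := ⟨_, rfl⟩
  obtain ⟨lg, hlg⟩ : ∃ lg : ℝ, lg = Real.log (1 + u) := ⟨_, rfl⟩
  have ha0 : 0 < a := by rw [ha]; positivity
  have hu2 : 2 ≤ u := by
    rw [hu, le_div_iff₀ (by positivity)]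
    linarith
  have hlogu : 1 ≤ lg := hlg ▸ one_le_log_one_add hu2
  suffices hs : m ≤ (6 * dR / b) * lg by rwa [hlg, hu] at hs
  obtain ⟨M, hM⟩ : ∃ M : ℝ, M = (6 * dR / b) * lg := ⟨_, rfl⟩
  rw [← hM]
  by_contra hcon
  push_neg at hcon
  have hMb : M * b = 6 * dR * lg := by rw [hM]; field_simp
  have hMpos : 0 < M := by rw [hM]; positivity
  have key1 : m * (b / 2) ≤ dR * Real.log (1 + m * a) := by
    have hhalf := half_le_log_one_add hb0 hb1
    have h' : m * (b / 2) ≤ m * Real.log (1 + b) :=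
      mul_le_mul_of_nonneg_left hhalf hm0
    have e : m * L ^ 2 / (dR * lam) = m * a := by rw [ha]; ring
    rw [e] at h
    linarith
  have hMa : M * a = 3 * u * lg := by
    rw [hM, ha, hu]; field_simp; ring
  have hlogle : lg ≤ u := by
    have := Real.log_le_sub_one_of_pos (show (0:ℝ) < 1 + u by linarith)
    rw [← hlg] at this
    linarith
  have hlg0 : 0 < lg := by linarith
  have h2 : Real.log (1 + M * a) < 3 * lg := by
    have h3u : 3 * u * lg ≤ 3 * (u * u) := by nlinarith
    have harg : 1 + M * a < (1 + u) ^ 3 := by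
      rw [hMa]
      have hexp : (1 + u) ^ 3 = 1 + 3 * u + 3 * (u * u) + u * (u * u) := by ring
      nlinarith
    have := Real.log_lt_log (by positivity) harg
    rw [Real.log_pow, Nat.cast_ofNat, ← hlg] at this
    exact this
  have hMa0 : 0 < 1 + M * a := by nlinarith [mul_pos hMpos ha0]
  have hma0 : 0 < 1 + m * a := by nlinarith [mul_nonneg hm0 ha0.le]
  have h3 : Real.log (1 + m * a) ≤ Real.log (1 + M * a) + (m - M) * a / (1 + M * a) := by
    have hdiv := Real.log_le_sub_one_of_pos (show 0 < (1 + m * a) / (1 + M * a) by positivity)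
    rw [Real.log_div hma0.ne' hMa0.ne'] at hdiv
    have e : (1 + m * a) / (1 + M * a) - 1 = (m - M) * a / (1 + M * a) := by
      field_simp
      ring
    linarith [e ▸ hdiv]
  have h6 : 6 * dR * a * 1 ≤ 6 * dR * a * lg :=
    mul_le_mul_of_nonneg_left hlogu (by positivity)
  have hMab : M * a * b = 6 * dR * a * lg := by
    rw [hM]; field_simp
  have hball : 2 * dR * a ≤ b * (1 + M * a) := by
    have h8 : 6 * dR * a ≤ M * a * b := by rw [hMab]; linarith
    have h9 : 0 < dR * a := mul_pos hdR ha0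
    linarith
  have hstep : dR * a / (1 + M * a) ≤ b / 2 := by
    rw [div_le_iff₀ hMa0]
    linarith
  have h4 : dR * ((m - M) * a / (1 + M * a)) ≤ (m - M) * (b / 2) := by
    have hmm : (0:ℝ) ≤ m - M := by linarith
    calc dR * ((m - M) * a / (1 + M * a)) = (m - M) * (dR * a / (1 + M * a)) := by ring
      _ ≤ (m - M) * (b / 2) := mul_le_mul_of_nonneg_left hstep hmm
  have h5 : dR * Real.log (1 + m * a)
      ≤ dR * Real.log (1 + M * a) + dR * ((m - M) * a / (1 + M * a)) := by
    have := mul_le_mul_of_nonneg_left h3 hdR.le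
    linarith [mul_add dR (Real.log (1 + M * a)) ((m - M) * a / (1 + M * a))]
  have h7 : dR * Real.log (1 + M * a) < dR * (3 * lg) :=
    mul_lt_mul_of_pos_left h2 hdR
  have hMhalf : M * (b / 2) = 3 * dR * lg := by
    have : M * (b / 2) = M * b / 2 := by ring
    rw [this, hMb]; ring
  have hfinal : dR * Real.log (1 + m * a) < m * (b / 2) := by
    have : dR * Real.log (1 + m * a) < 3 * dR * lg + (m - M) * (b / 2) := by linarith
    have e2 : 3 * dR * lg + (m - M) * (b / 2) = m * (b / 2) := by
      rw [← hMhalf]; ring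
    linarith
  linarith

end Scalar

section Count
variable {d : ℕ}

lemma posSemidef_sum {ι : Type*} [DecidableEq ι] (s : Finset ι)
    (f : ι → Matrix (Fin d) (Fin d) ℝ)
    (hf : ∀ i ∈ s, (f i).PosSemidef) : (∑ i ∈ s, f i).PosSemidef := by
  induction s using Finset.induction_on with
  | empty => simpa using Matrix.PosSemidef.zero
  | @insert a s ha ih =>
    rw [Finset.sum_insert ha]
    exact (hf a (Finset.mem_insert_self a s)).add
      (ih fun i hi => hf i (Finset.mem_insert_of_mem hi))

lemma posDef_smul_one {lam : ℝ} (hlam : 0 < lam) :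
    (lam • (1 : Matrix (Fin d) (Fin d) ℝ)).PosDef := by
  rw [Matrix.smul_one_eq_diagonal]
  exact Matrix.PosDef.diagonal fun _ => hlam

set_option maxHeartbeats 1000000 in
lemma count_card_le (T : ℕ) (lam L : ℝ) (hd : 1 ≤ d) (hlam : 0 < lam) (hL : 0 < L)
    (X : ℕ → Fin d → ℝ) (hX : ∀ t ∈ Finset.Icc 1 T, X t ⬝ᵥ X t ≤ L ^ 2)
    (V : ℕ → Matrix (Fin d) (Fin d) ℝ)
    (hV0 : V 0 = lam • (1 : Matrix (Fin d) (Fin d) ℝ))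
    (hV : ∀ t, V (t + 1) = V t + Matrix.vecMulVec (X (t + 1)) (X (t + 1)))
    (b : ℝ) (hb0 : 0 < b) (hb1 : b ≤ 1)
    (S : Finset ℕ) (hS : S ⊆ Finset.Icc 1 T)
    (hSb : ∀ t ∈ S, b ≤ X t ⬝ᵥ (V (t - 1))⁻¹ *ᵥ X t) :
    (S.card : ℝ) ≤ (6 * d / b) * Real.log (1 + 2 * L ^ 2 / (lam * b)) := by
  have hdR : (1:ℝ) ≤ (d:ℝ) := by exact_mod_cast hd
  have hd0 : (0:ℝ) < (d:ℝ) := by linarith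
  -- closed form for V
  have hVn : ∀ n, V n = lam • (1 : Matrix (Fin d) (Fin d) ℝ)
      + ∑ t ∈ Finset.Icc 1 n, Matrix.vecMulVec (X t) (X t) := by
    intro n
    induction n with
    | zero => simp [hV0]
    | succ n ih =>
        rw [hV n, ih, Finset.sum_Icc_succ_top (Nat.one_le_iff_ne_zero.mpr (Nat.succ_ne_zero n))]
        abel
  have hVpos : ∀ n, (V n).PosDef := by
    intro n
    rw [hVn n]
    exact (posDef_smul_one hlam).add_posSemidef
      (posSemidef_sum _ _ fun t _ => posSemidef_vecMulVec (X t))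
  -- the pruned matrix sequence
  set W : ℕ → Matrix (Fin d) (Fin d) ℝ := fun n =>
    lam • (1 : Matrix (Fin d) (Fin d) ℝ)
      + ∑ t ∈ S.filter (fun s => s ≤ n), Matrix.vecMulVec (X t) (X t) with hW
  have hWpos : ∀ n, (W n).PosDef := by
    intro n
    exact (posDef_smul_one hlam).add_posSemidef
      (posSemidef_sum _ _ fun t _ => posSemidef_vecMulVec (X t))
  have hsub : ∀ n, S.filter (fun s => s ≤ n) ⊆ Finset.Icc 1 n := by
    intro n t ht
    rw [Finset.mem_filter] at ht
    have := Finset.mem_Icc.mp (hS ht.1)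
    exact Finset.mem_Icc.mpr ⟨this.1, ht.2⟩
  have hVW : ∀ n, (V n - W n).PosSemidef := by
    intro n
    have hsd := Finset.sum_sdiff (f := fun t => Matrix.vecMulVec (X t) (X t)) (hsub n)
    have he : V n = W n + ∑ t ∈ Finset.Icc 1 n \ S.filter (fun s => s ≤ n),
        Matrix.vecMulVec (X t) (X t) := by
      rw [hVn n, hW, ← hsd]
      beta_reduce
      abel
    rw [he, add_sub_cancel_left]
    exact posSemidef_sum _ _ fun t _ => posSemidef_vecMulVec (X t)
  -- determinant lower bound by induction
  have hdet : ∀ n, lam ^ d * (1 + b) ^ (S.filter (fun s => s ≤ n)).card ≤ (W n).det := by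
    intro n
    induction n with
    | zero =>
        have hfe : S.filter (fun s => s ≤ 0) = ∅ := by
          rw [Finset.filter_eq_empty_iff]
          intro t ht
          have := (Finset.mem_Icc.mp (hS ht)).1
          omega
        rw [hW]
        simp only [hfe, Finset.sum_empty, Finset.card_empty, pow_zero, mul_one, add_zero]
        rw [Matrix.det_smul, Matrix.det_one, Fintype.card_fin, mul_one]
    | succ n ih =>
        by_cases hmem : n + 1 ∈ S
        · have hnot : n + 1 ∉ S.filter (fun s => s ≤ n) := by
            simp [Finset.mem_filter]
          have hfil : S.filter (fun s => s ≤ n + 1)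
              = insert (n + 1) (S.filter (fun s => s ≤ n)) := by
            ext t
            simp only [Finset.mem_filter, Finset.mem_insert]
            constructor
            · rintro ⟨h1, h2⟩
              rcases Nat.lt_or_ge t (n + 1) with hlt | hge
              · exact Or.inr ⟨h1, by omega⟩
              · exact Or.inl (by omega)
            · rintro (rfl | ⟨h1, h2⟩)
              · exact ⟨hmem, le_refl _⟩
              · exact ⟨h1, by omega⟩
          have hWstep : W (n + 1) = W n + Matrix.vecMulVec (X (n + 1)) (X (n + 1)) := by
            rw [hW]
            simp only
            rw [hfil, Finset.sum_insert hnot]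
            abel
          have hdetW : (W (n + 1)).det
              = (W n).det * (1 + X (n + 1) ⬝ᵥ (W n)⁻¹ *ᵥ X (n + 1)) := by
            rw [hWstep]
            exact det_add_vecMulVec (hWpos n).det_pos.ne'.isUnit _
          have hquad : b ≤ X (n + 1) ⬝ᵥ (W n)⁻¹ *ᵥ X (n + 1) := by
            have h1 := hSb (n + 1) hmem
            rw [Nat.add_sub_cancel] at h1
            exact h1.trans (quad_inv_antitone (hWpos n) (hVpos n) (hVW n) _)
          rw [hfil, Finset.card_insert_of_notMem hnot, hdetW, pow_succ, ← mul_assoc]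
          apply mul_le_mul ih (by linarith) (by linarith) (hWpos n).det_pos.le
        · have hfil : S.filter (fun s => s ≤ n + 1) = S.filter (fun s => s ≤ n) := by
            ext t
            simp only [Finset.mem_filter]
            constructor
            · rintro ⟨h1, h2⟩
              refine ⟨h1, ?_⟩
              rcases Nat.lt_or_ge t (n + 1) with hlt | hge
              · omega
              · exfalso; have : t = n + 1 := by omega
                exact hmem (this ▸ h1)
            · rintro ⟨h1, h2⟩
              exact ⟨h1, by omega⟩
          have hWstep : W (n + 1) = W n := by
            rw [hW]
            simp only
            rw [hfil]
          rw [hfil, hWstep]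
          exact ih
  -- trace bound
  have hfilT : S.filter (fun s => s ≤ T) = S :=
    Finset.filter_true_of_mem fun t ht => (Finset.mem_Icc.mp (hS ht)).2
  have htr_eq : (W T).trace = d * lam + ∑ t ∈ S, X t ⬝ᵥ X t := by
    rw [hW]
    simp only
    rw [hfilT, Matrix.trace_add, Matrix.trace_smul, Matrix.trace_one, Matrix.trace_sum,
      Finset.sum_congr rfl fun t (_ : t ∈ S) => trace_vecMulVec' (X t)]
    simp only [smul_eq_mul, Fintype.card_fin]
    ring
  have hsumX : ∑ t ∈ S, X t ⬝ᵥ X t ≤ (S.card : ℝ) * L ^ 2 := by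
    calc ∑ t ∈ S, X t ⬝ᵥ X t ≤ ∑ _t ∈ S, L ^ 2 :=
          Finset.sum_le_sum fun t ht => hX t (hS ht)
      _ = (S.card : ℝ) * L ^ 2 := by rw [Finset.sum_const, nsmul_eq_mul]
  have hsumX0 : 0 ≤ ∑ t ∈ S, X t ⬝ᵥ X t :=
    Finset.sum_nonneg fun t _ => by
      simpa [dotProduct] using Finset.sum_nonneg fun i (_ : i ∈ Finset.univ) =>
        mul_self_nonneg (X t i)
  -- combine determinant and trace
  have hm0 : (0:ℝ) ≤ (S.card : ℝ) := Nat.cast_nonneg _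
  have hkey : ((S.card : ℝ)) * Real.log (1 + b)
      ≤ (d:ℝ) * Real.log (1 + (S.card : ℝ) * L ^ 2 / ((d:ℝ) * lam)) := by
    have hL1 : lam ^ d * (1 + b) ^ S.card ≤ (W T).det := by
      have := hdet T
      rwa [hfilT] at this
    have hL2 : (W T).det ≤ ((W T).trace / d) ^ d :=
      det_le_trace_div_pow hd (hWpos T).posSemidef
    have htrb : (W T).trace / d ≤ lam * (1 + (S.card : ℝ) * L ^ 2 / ((d:ℝ) * lam)) := by
      rw [htr_eq, div_le_iff₀ hd0]
      have : lam * (1 + (S.card : ℝ) * L ^ 2 / ((d:ℝ) * lam)) * d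
          = d * lam + (S.card : ℝ) * L ^ 2 := by
        field_simp
      rw [this]
      linarith
    have htrd0 : 0 ≤ (W T).trace / d := by
      rw [htr_eq]
      positivity
    have hL3 : ((W T).trace / d) ^ d
        ≤ (lam * (1 + (S.card : ℝ) * L ^ 2 / ((d:ℝ) * lam))) ^ d :=
      pow_le_pow_left₀ htrd0 htrb d
    have hfac : (lam * (1 + (S.card : ℝ) * L ^ 2 / ((d:ℝ) * lam))) ^ d
        = lam ^ d * (1 + (S.card : ℝ) * L ^ 2 / ((d:ℝ) * lam)) ^ d := mul_pow _ _ _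
    have hpow : (1 + b) ^ S.card ≤ (1 + (S.card : ℝ) * L ^ 2 / ((d:ℝ) * lam)) ^ d := by
      have hlp : (0:ℝ) < lam ^ d := by positivity
      have := hL1.trans (hL2.trans (hL3.trans_eq hfac))
      exact le_of_mul_le_mul_left this hlp
    have hlog := Real.log_le_log (by positivity) hpow
    rwa [Real.log_pow, Real.log_pow] at hlog
  -- get `lam * b ≤ L ^ 2` or conclude trivially
  rcases S.eq_empty_or_nonempty with rfl | ⟨t0, ht0⟩
  · simp only [Finset.card_empty, Nat.cast_zero]
    apply mul_nonneg
    · positivity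
    · apply Real.log_nonneg
      have : 0 ≤ 2 * L ^ 2 / (lam * b) := by positivity
      linarith
  · have hbL : lam * b ≤ L ^ 2 := by
      have h1 := hSb t0 ht0
      have h2 : X t0 ⬝ᵥ (V (t0 - 1))⁻¹ *ᵥ X t0
          ≤ X t0 ⬝ᵥ (lam • (1 : Matrix (Fin d) (Fin d) ℝ))⁻¹ *ᵥ X t0 := by
        apply quad_inv_antitone (posDef_smul_one hlam) (hVpos (t0 - 1))
        have : V (t0 - 1) - lam • (1 : Matrix (Fin d) (Fin d) ℝ)
            = ∑ t ∈ Finset.Icc 1 (t0 - 1), Matrix.vecMulVec (X t) (X t) := by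
          rw [hVn (t0 - 1)]; abel
        rw [this]
        exact posSemidef_sum _ _ fun t _ => posSemidef_vecMulVec (X t)
      have hinv : (lam • (1 : Matrix (Fin d) (Fin d) ℝ))⁻¹ = lam⁻¹ • 1 := by
        apply Matrix.inv_eq_right_inv
        rw [Matrix.smul_mul, Matrix.mul_smul, Matrix.mul_one, smul_smul,
          mul_inv_cancel₀ hlam.ne', one_smul]
      rw [hinv] at h2
      have h3 : X t0 ⬝ᵥ (lam⁻¹ • (1 : Matrix (Fin d) (Fin d) ℝ)) *ᵥ X t0
          = lam⁻¹ * (X t0 ⬝ᵥ X t0) := by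
        rw [Matrix.smul_mulVec, Matrix.one_mulVec, dotProduct_smul, smul_eq_mul]
      rw [h3] at h2
      have h4 : X t0 ⬝ᵥ X t0 ≤ L ^ 2 := hX t0 (hS ht0)
      have h5 : b ≤ lam⁻¹ * L ^ 2 := by
        calc b ≤ lam⁻¹ * (X t0 ⬝ᵥ X t0) := h1.trans h2
          _ ≤ lam⁻¹ * L ^ 2 := by
              apply mul_le_mul_of_nonneg_left h4 (by positivity)
      calc lam * b ≤ lam * (lam⁻¹ * L ^ 2) :=
            mul_le_mul_of_nonneg_left h5 hlam.le
        _ = L ^ 2 := by field_simp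
    exact scalar_count hdR hlam hL hb0 hb1 hbL hm0 hkey

end Count

set_option maxHeartbeats 2000000 in
/-- **Deterministic peeling bound.** With `V_0 = λ·I_d`, `V_t = V_{t−1} + X_t X_tᵀ`,
`‖X_t‖ ≤ L`, gaps `Δ_t ∈ [0,1]`, and a nondecreasing sequence `β_0 ≤ … ≤ β_{T−1}` with
`β_0 ≥ 1` (write `β := β_{T−1}`), for every `Γ ∈ (0,1)`:
`Σ_{t=1}^T Δ_t·1{‖X_t‖²_{V_{t−1}⁻¹} ≥ Δ_t²/β_{t−1}} ≤ T·Γ + (48dβ/Γ)·log(1 + 8L²β/(λΓ²))`. -/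
theorem peeling_bound (d T : ℕ) (hd : 1 ≤ d) (hT : 1 ≤ T) (lam L : ℝ)
    (hlam : 0 < lam) (hL : 0 < L)
    (X : ℕ → Fin d → ℝ) (hX : ∀ t ∈ Finset.Icc 1 T, enorm2 (X t) ≤ L)
    (V : ℕ → Matrix (Fin d) (Fin d) ℝ)
    (hV0 : V 0 = lam • (1 : Matrix (Fin d) (Fin d) ℝ))
    (hV : ∀ t, V (t + 1) = V t + Matrix.vecMulVec (X (t + 1)) (X (t + 1)))
    (Δ : ℕ → ℝ) (hΔ : ∀ t ∈ Finset.Icc 1 T, Δ t ∈ Set.Icc (0 : ℝ) 1)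
    (β : ℕ → ℝ) (hβ0 : 1 ≤ β 0)
    (hβmono : ∀ s t : ℕ, s ≤ t → t ≤ T - 1 → β s ≤ β t)
    (Γ : ℝ) (hΓ0 : 0 < Γ) (hΓ1 : Γ < 1) :
    ∑ t ∈ Finset.Icc 1 T,
        Δ t * (if Δ t ^ 2 / β (t - 1) ≤ X t ⬝ᵥ (V (t - 1))⁻¹.mulVec (X t) then (1 : ℝ) else 0)
      ≤ T * Γ + (48 * d * β (T - 1) / Γ) *
          Real.log (1 + 8 * L ^ 2 * β (T - 1) / (lam * Γ ^ 2)) := by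
  classical
  have hβ' : 1 ≤ β (T - 1) := le_trans hβ0 (hβmono 0 (T - 1) (Nat.zero_le _) le_rfl)
  have hβ'0 : 0 < β (T - 1) := by linarith
  obtain ⟨LOG, hLOG⟩ : ∃ x : ℝ, x = Real.log (1 + 8 * L ^ 2 * β (T - 1) / (lam * Γ ^ 2)) :=
    ⟨_, rfl⟩
  have hLOG0 : 0 ≤ LOG := by
    rw [hLOG]
    apply Real.log_nonneg
    have : 0 ≤ 8 * L ^ 2 * β (T - 1) / (lam * Γ ^ 2) := by positivity
    linarith
  have hXsq : ∀ t ∈ Finset.Icc 1 T, X t ⬝ᵥ X t ≤ L ^ 2 := by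
    intro t ht
    have h0 : 0 ≤ X t ⬝ᵥ X t := by
      simpa [dotProduct] using
        Finset.sum_nonneg fun i (_ : i ∈ Finset.univ) => mul_self_nonneg (X t i)
    have h1 : Real.sqrt (X t ⬝ᵥ X t) ≤ L := hX t ht
    have h2 : Real.sqrt (X t ⬝ᵥ X t) ^ 2 ≤ L ^ 2 :=
      pow_le_pow_left₀ (Real.sqrt_nonneg _) h1 2
    rwa [Real.sq_sqrt h0] at h2
  set A : Finset ℕ := (Finset.Icc 1 T).filter
    (fun t => Δ t ^ 2 / β (t - 1) ≤ X t ⬝ᵥ (V (t - 1))⁻¹ *ᵥ X t) with hA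
  have hsum : (∑ t ∈ Finset.Icc 1 T,
      Δ t * (if Δ t ^ 2 / β (t - 1) ≤ X t ⬝ᵥ (V (t - 1))⁻¹.mulVec (X t) then (1:ℝ) else 0))
      = ∑ t ∈ A, Δ t := by
    rw [hA, Finset.sum_filter]
    exact Finset.sum_congr rfl fun t _ => by split <;> simp
  rw [hsum]
  set A1 : Finset ℕ := A.filter (fun t => Δ t ≤ Γ) with hA1
  set A2 : Finset ℕ := A.filter (fun t => ¬ Δ t ≤ Γ) with hA2
  have hsplit : ∑ t ∈ A, Δ t = ∑ t ∈ A1, Δ t + ∑ t ∈ A2, Δ t :=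
    (Finset.sum_filter_add_sum_filter_not A _ Δ).symm
  have hAsub : A ⊆ Finset.Icc 1 T := Finset.filter_subset _ _
  -- part 1
  have hpart1 : ∑ t ∈ A1, Δ t ≤ T * Γ := by
    have hcard : A1.card ≤ T := by
      have h1 : A1 ⊆ Finset.Icc 1 T := (Finset.filter_subset _ _).trans hAsub
      have := Finset.card_le_card h1
      rwa [Nat.card_Icc, Nat.add_sub_cancel] at this
    calc ∑ t ∈ A1, Δ t ≤ A1.card • Γ :=
          Finset.sum_le_card_nsmul A1 Δ Γ fun t ht => (Finset.mem_filter.mp ht).2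
      _ = (A1.card : ℝ) * Γ := nsmul_eq_mul _ _
      _ ≤ T * Γ := by
          apply mul_le_mul_of_nonneg_right _ hΓ0.le
          exact_mod_cast hcard
  -- the dyadic level N
  have hex : ∃ n : ℕ, (1/2 : ℝ) ^ n < Γ :=
    exists_pow_lt_of_lt_one hΓ0 (by norm_num)
  set N := Nat.find hex with hN
  have hNlt : (1/2 : ℝ) ^ N < Γ := Nat.find_spec hex
  have hN1 : 1 ≤ N := by
    by_contra hcon
    have h0 : N = 0 := by omega
    rw [h0, pow_zero] at hNlt
    linarith
  have hNprev : Γ ≤ (1/2 : ℝ) ^ (N - 1) := by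
    have := Nat.find_min hex (show N - 1 < N by omega)
    linarith [not_lt.mp this]
  have hhalf : Γ / 2 ≤ (1/2 : ℝ) ^ N := by
    have he : (1/2 : ℝ) ^ N = (1/2) ^ (N - 1) * (1/2) := by
      rw [← pow_succ]
      congr 1
      omega
    rw [he]
    linarith
  -- buckets
  set B : ℕ → Finset ℕ := fun l => A2.filter
    (fun t => (1/2 : ℝ) ^ l < Δ t ∧ Δ t ≤ (1/2 : ℝ) ^ (l - 1)) with hB
  have hcover : A2 = (Finset.Icc 1 N).biUnion B := by
    ext t
    constructor
    · intro ht
      obtain ⟨htA, htΓ⟩ := Finset.mem_filter.mp ht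
      push_neg at htΓ
      have htIcc : t ∈ Finset.Icc 1 T := hAsub htA
      have hΔ1 : Δ t ≤ 1 := (hΔ t htIcc).2
      have hex2 : ∃ l : ℕ, (1/2 : ℝ) ^ l < Δ t := ⟨N, hNlt.trans htΓ⟩
      set l := Nat.find hex2 with hl
      have hspec : (1/2 : ℝ) ^ l < Δ t := Nat.find_spec hex2
      have hlN : l ≤ N := Nat.find_le (hNlt.trans htΓ)
      have hl1 : 1 ≤ l := by
        by_contra hcon
        have h0 : l = 0 := by omega
        rw [h0, pow_zero] at hspec
        linarith
      have hmin : Δ t ≤ (1/2 : ℝ) ^ (l - 1) := by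
        have := Nat.find_min hex2 (show l - 1 < l by omega)
        linarith [not_lt.mp this]
      refine Finset.mem_biUnion.mpr ⟨l, Finset.mem_Icc.mpr ⟨hl1, hlN⟩, ?_⟩
      exact Finset.mem_filter.mpr ⟨ht, hspec, hmin⟩
    · intro ht
      obtain ⟨l, _, htl⟩ := Finset.mem_biUnion.mp ht
      exact (Finset.filter_subset _ _) htl
  have hdisj : (↑(Finset.Icc 1 N) : Set ℕ).PairwiseDisjoint B := by
    have key : ∀ l l' : ℕ, l < l' → Disjoint (B l) (B l') := by
      intro l l' hll'
      rw [Finset.disjoint_left]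
      intro t htl htl'
      obtain ⟨_, hlo, _⟩ := Finset.mem_filter.mp htl
      obtain ⟨_, _, hhi'⟩ := Finset.mem_filter.mp htl'
      have hle : (1/2 : ℝ) ^ (l' - 1) ≤ (1/2 : ℝ) ^ l := by
        apply pow_le_pow_of_le_one (by norm_num) (by norm_num)
        omega
      linarith
    intro l _ l' _ hne
    rcases lt_or_gt_of_ne hne with h | h
    · exact key l l' h
    · exact (key l' l h).symm
  have hsumA2 : ∑ t ∈ A2, Δ t = ∑ l ∈ Finset.Icc 1 N, ∑ t ∈ B l, Δ t := by
    rw [hcover]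
    exact Finset.sum_biUnion hdisj
  -- per-bucket bound
  have hbucket : ∀ l ∈ Finset.Icc 1 N,
      ∑ t ∈ B l, Δ t ≤ 12 * d * β (T - 1) * LOG * (2:ℝ) ^ l := by
    intro l hl
    obtain ⟨hl1, hlN⟩ := Finset.mem_Icc.mp hl
    have hp : (0:ℝ) < (1/2 : ℝ) ^ l := by positivity
    obtain ⟨bl, hbl⟩ : ∃ x : ℝ, x = ((1/2 : ℝ) ^ l) ^ 2 / β (T - 1) := ⟨_, rfl⟩
    have hbl0 : 0 < bl := by rw [hbl]; positivity
    have hbl1 : bl ≤ 1 := by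
      rw [hbl, div_le_one hβ'0]
      have h1 : ((1/2 : ℝ) ^ l) ^ 2 ≤ 1 := by
        apply pow_le_one₀ hp.le
        apply pow_le_one₀ <;> norm_num
      linarith
    have hBsub : B l ⊆ Finset.Icc 1 T :=
      ((Finset.filter_subset _ _).trans (Finset.filter_subset _ _)).trans hAsub
    have hper : ∀ t ∈ B l, bl ≤ X t ⬝ᵥ (V (t - 1))⁻¹ *ᵥ X t := by
      intro t ht
      obtain ⟨htA2, hlo, _⟩ := Finset.mem_filter.mp ht
      obtain ⟨htA, _⟩ := Finset.mem_filter.mp htA2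
      obtain ⟨htIcc, hind⟩ := Finset.mem_filter.mp htA
      have htT : t ≤ T := (Finset.mem_Icc.mp htIcc).2
      have hβt1 : 1 ≤ β (t - 1) :=
        hβ0.trans (hβmono 0 (t - 1) (Nat.zero_le _) (by omega))
      have hβtβ' : β (t - 1) ≤ β (T - 1) := hβmono (t - 1) (T - 1) (by omega) le_rfl
      have hsq : ((1/2 : ℝ) ^ l) ^ 2 ≤ Δ t ^ 2 := pow_le_pow_left₀ hp.le hlo.le 2
      have c1 : bl ≤ ((1/2 : ℝ) ^ l) ^ 2 / β (t - 1) := by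
        rw [hbl]
        apply div_le_div_of_nonneg_left (by positivity) (by linarith) hβtβ'
      have c2 : ((1/2 : ℝ) ^ l) ^ 2 / β (t - 1) ≤ Δ t ^ 2 / β (t - 1) :=
        div_le_div_of_nonneg_right hsq (by linarith)
      exact (c1.trans c2).trans hind
    have hcount := count_card_le T lam L hd hlam hL X hXsq V hV0 hV bl hbl0 hbl1
      (B l) hBsub hper
    -- replace the log by LOG
    have hlhalf : Γ / 2 ≤ (1/2 : ℝ) ^ l := by
      have : (1/2 : ℝ) ^ N ≤ (1/2 : ℝ) ^ l :=
        pow_le_pow_of_le_one (by norm_num) (by norm_num) hlN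
      linarith
    have hbllow : Γ ^ 2 / 4 / β (T - 1) ≤ bl := by
      rw [hbl]
      have := pow_le_pow_left₀ (by positivity : (0:ℝ) ≤ Γ / 2) hlhalf 2
      have hnum : Γ ^ 2 / 4 ≤ ((1/2 : ℝ) ^ l) ^ 2 := by
        calc Γ ^ 2 / 4 = (Γ / 2) ^ 2 := by ring
          _ ≤ ((1/2 : ℝ) ^ l) ^ 2 := this
      gcongr
    have hlogle : Real.log (1 + 2 * L ^ 2 / (lam * bl)) ≤ LOG := by
      rw [hLOG]
      apply Real.log_le_log (by positivity)
      have h1 : lam * (Γ ^ 2 / 4 / β (T - 1)) ≤ lam * bl :=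
        mul_le_mul_of_nonneg_left hbllow hlam.le
      have h2 : 2 * L ^ 2 / (lam * bl) ≤ 2 * L ^ 2 / (lam * (Γ ^ 2 / 4 / β (T - 1))) :=
        div_le_div_of_nonneg_left (by positivity) (by positivity) h1
      have h3 : 2 * L ^ 2 / (lam * (Γ ^ 2 / 4 / β (T - 1)))
          = 8 * L ^ 2 * β (T - 1) / (lam * Γ ^ 2) := by
        field_simp
        ring
      linarith
    have hcard : ((B l).card : ℝ) ≤ (6 * d / bl) * LOG := by
      calc ((B l).card : ℝ) ≤ (6 * d / bl) * Real.log (1 + 2 * L ^ 2 / (lam * bl)) := hcount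
        _ ≤ (6 * d / bl) * LOG := by
            apply mul_le_mul_of_nonneg_left hlogle (by positivity)
    have hsumle : ∑ t ∈ B l, Δ t ≤ ((B l).card : ℝ) * (1/2 : ℝ) ^ (l - 1) := by
      calc ∑ t ∈ B l, Δ t ≤ (B l).card • ((1/2 : ℝ) ^ (l - 1)) :=
            Finset.sum_le_card_nsmul _ _ _ fun t ht => (Finset.mem_filter.mp ht).2.2
        _ = ((B l).card : ℝ) * (1/2 : ℝ) ^ (l - 1) := nsmul_eq_mul _ _
    have heq : (6 * d / bl) * LOG * (1/2 : ℝ) ^ (l - 1)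
        = 12 * d * β (T - 1) * LOG * (2:ℝ) ^ l := by
      have he1 : (1/2 : ℝ) ^ (l - 1) = 2 * (1/2 : ℝ) ^ l := by
        have : (1/2 : ℝ) ^ l = (1/2) ^ (l - 1) * (1/2) := by
          rw [← pow_succ]
          congr 1
          omega
        rw [this]
        ring
      have he2 : (1/2 : ℝ) ^ l = ((2:ℝ) ^ l)⁻¹ := by
        rw [one_div, inv_pow]
      have h2l : (0:ℝ) < (2:ℝ) ^ l := by positivity
      rw [hbl, he1, he2]
      field_simp
      ring
    calc ∑ t ∈ B l, Δ t ≤ ((B l).card : ℝ) * (1/2 : ℝ) ^ (l - 1) := hsumle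
      _ ≤ (6 * d / bl) * LOG * (1/2 : ℝ) ^ (l - 1) :=
          mul_le_mul_of_nonneg_right hcard (by positivity)
      _ = 12 * d * β (T - 1) * LOG * (2:ℝ) ^ l := heq
  -- sum the geometric series
  have hgeom : ∑ l ∈ Finset.Icc 1 N, (2:ℝ) ^ l ≤ 4 / Γ := by
    have hsubr : Finset.Icc 1 N ⊆ Finset.range (N + 1) := by
      intro l hl
      rw [Finset.mem_range]
      exact Nat.lt_succ_of_le (Finset.mem_Icc.mp hl).2
    have h1 : ∑ l ∈ Finset.Icc 1 N, (2:ℝ) ^ l ≤ ∑ l ∈ Finset.range (N + 1), (2:ℝ) ^ l :=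
      Finset.sum_le_sum_of_subset_of_nonneg hsubr fun i _ _ => by positivity
    have h2 : ∑ l ∈ Finset.range (N + 1), (2:ℝ) ^ l = 2 ^ (N + 1) - 1 := by
      rw [geom_sum_eq (by norm_num : (2:ℝ) ≠ 1)]
      norm_num
    have h3 : (2:ℝ) ^ N ≤ 2 / Γ := by
      have hi : (1/2 : ℝ) ^ N = ((2:ℝ) ^ N)⁻¹ := by rw [one_div, inv_pow]
      rw [hi] at hhalf
      have h2N : (0:ℝ) < (2:ℝ) ^ N := by positivity
      rw [le_inv_comm₀ (by positivity) h2N] at hhalf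
      calc (2:ℝ) ^ N ≤ (Γ / 2)⁻¹ := hhalf
        _ = 2 / Γ := by rw [inv_div]
    have h4 : (2:ℝ) ^ (N + 1) = 2 * 2 ^ N := by ring
    have : (2:ℝ) ^ (N + 1) ≤ 4 / Γ := by
      rw [h4]
      calc 2 * (2:ℝ) ^ N ≤ 2 * (2 / Γ) := by linarith
        _ = 4 / Γ := by ring
    linarith
  have hpart2 : ∑ t ∈ A2, Δ t ≤ (48 * d * β (T - 1) / Γ) * LOG := by
    calc ∑ t ∈ A2, Δ t = ∑ l ∈ Finset.Icc 1 N, ∑ t ∈ B l, Δ t := hsumA2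
      _ ≤ ∑ l ∈ Finset.Icc 1 N, 12 * d * β (T - 1) * LOG * (2:ℝ) ^ l :=
          Finset.sum_le_sum hbucket
      _ = 12 * d * β (T - 1) * LOG * ∑ l ∈ Finset.Icc 1 N, (2:ℝ) ^ l := by
          rw [Finset.mul_sum]
      _ ≤ 12 * d * β (T - 1) * LOG * (4 / Γ) := by
          apply mul_le_mul_of_nonneg_left hgeom
          positivity
      _ = (48 * d * β (T - 1) / Γ) * LOG := by
          field_simp
          ring
  rw [hsplit, hLOG] at *
  linarith [hpart1, hpart2]
end

section
/- Let q ∈ ℕ with q ≥ 1, and let u, v, δ > 0 be real numbers such that log(1/u) ≤ q²·δ²/(4v) + log(1/v) and v ≥ (q+1)²·δ²/4. Then u ≥ ((q+1)²·δ²/4)·exp(−q²/(q+1)²). -/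
/-- Key elementary step in the `F₃` bound for LinIMED-1: if
`log(1/u) ≤ q²δ²/(4v) + log(1/v)` and `v ≥ (q+1)²δ²/4`, then
`u ≥ ((q+1)²δ²/4)·exp(−q²/(q+1)²)`. -/
theorem f3_key_step (q : ℕ) (hq : 1 ≤ q) (u v δ : ℝ) (hu : 0 < u) (hv : 0 < v) (hδ : 0 < δ)
    (h1 : Real.log (1 / u) ≤ (q : ℝ) ^ 2 * δ ^ 2 / (4 * v) + Real.log (1 / v))
    (h2 : ((q : ℝ) + 1) ^ 2 * δ ^ 2 / 4 ≤ v) :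
    (((q : ℝ) + 1) ^ 2 * δ ^ 2 / 4) * Real.exp (-(q : ℝ) ^ 2 / ((q : ℝ) + 1) ^ 2) ≤ u := by
  set c : ℝ := (q : ℝ) ^ 2 * δ ^ 2 / 4 with hc
  set v0 : ℝ := ((q : ℝ) + 1) ^ 2 * δ ^ 2 / 4 with hv0
  have hq1 : (0 : ℝ) < (q : ℝ) + 1 := by positivity
  have hv0pos : 0 < v0 := by rw [hv0]; positivity
  have hcnn : 0 ≤ c := by rw [hc]; positivity
  -- rewrite h1: log v - c/v ≤ log u
  rw [Real.log_div one_ne_zero hu.ne', Real.log_div one_ne_zero hv.ne', Real.log_one] at h1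
  have h1' : Real.log v - c / v ≤ Real.log u := by
    have : (q : ℝ) ^ 2 * δ ^ 2 / (4 * v) = c / v := by
      rw [hc]; field_simp
    rw [this] at h1; linarith
  have key : v * Real.exp (-(c / v)) ≤ u := by
    have := Real.exp_le_exp.mpr h1'
    rw [Real.exp_sub, Real.exp_log hv, Real.exp_log hu] at this
    rwa [Real.exp_neg, ← div_eq_mul_inv]
  have hratio : -(q : ℝ) ^ 2 / ((q : ℝ) + 1) ^ 2 = -(c / v0) := by
    rw [hc, hv0]; field_simp
  rw [hratio]
  calc v0 * Real.exp (-(c / v0)) ≤ v * Real.exp (-(c / v)) := by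
        apply mul_le_mul h2 (Real.exp_le_exp.mpr ?_) (Real.exp_pos _).le hv.le
        have : c / v ≤ c / v0 := div_le_div_of_nonneg_left hcnn hv0pos h2
        linarith
    _ ≤ u := key
end

section
/- Let q ∈ ℕ with q ≥ 1, let T ≥ 1 be real, and let δ, v > 0 be real numbers such that log T ≤ q²·δ²/(4v) + log(1/v) and v ≥ (q+1)²·δ²/4. Then δ ≤ 2·exp(q²/(2(q+1)²)) / ((q+1)·√T). -/
/-- Key elementary step in the `F₃` bound for LinIMED-2 (case where the index of the chosen
arm equals `log T`): if `log T ≤ q²δ²/(4v) + log(1/v)` and `v ≥ (q+1)²δ²/4`, then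
`δ ≤ 2·exp(q²/(2(q+1)²)) / ((q+1)·√T)`. -/
theorem f3_key_step_logT (q : ℕ) (hq : 1 ≤ q) (T δ v : ℝ) (hT : 1 ≤ T) (hδ : 0 < δ)
    (hv : 0 < v)
    (h1 : Real.log T ≤ (q : ℝ) ^ 2 * δ ^ 2 / (4 * v) + Real.log (1 / v))
    (h2 : ((q : ℝ) + 1) ^ 2 * δ ^ 2 / 4 ≤ v) :
    δ ≤ 2 * Real.exp ((q : ℝ) ^ 2 / (2 * ((q : ℝ) + 1) ^ 2)) / (((q : ℝ) + 1) * Real.sqrt T) := by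
  set Q : ℝ := (q : ℝ) with hQ
  have hQ0 : (0 : ℝ) ≤ Q := Nat.cast_nonneg q
  have hQ1 : (0 : ℝ) < Q + 1 := by positivity
  set c : ℝ := Q ^ 2 * δ ^ 2 / 4 with hc
  have hc0 : 0 ≤ c := by positivity
  set v0 : ℝ := (Q + 1) ^ 2 * δ ^ 2 / 4 with hv0
  have hv00 : 0 < v0 := by positivity
  have hvv0 : v0 ≤ v := h2
  -- exponentiate h1
  have hT0 : 0 < T := lt_of_lt_of_le one_pos hT
  have hTle : T ≤ Real.exp (c / v) * (1 / v) := by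
    have := Real.exp_le_exp.2 h1
    rw [Real.exp_log hT0, Real.exp_add, Real.exp_log (by positivity : (0:ℝ) < 1 / v)] at this
    have hcv : Q ^ 2 * δ ^ 2 / (4 * v) = c / v := by
      rw [hc]; ring
    rw [hcv] at this
    exact this
  -- decreasing in v
  have hmono : Real.exp (c / v) * (1 / v) ≤ Real.exp (c / v0) * (1 / v0) := by
    have h1' : Real.exp (c / v) ≤ Real.exp (c / v0) :=
      Real.exp_le_exp.2 (div_le_div_of_nonneg_left hc0 hv00 hvv0)
    have h2' : (1 : ℝ) / v ≤ 1 / v0 := one_div_le_one_div_of_le hv00 hvv0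
    exact mul_le_mul h1' h2' (by positivity) (Real.exp_pos _).le
  have hcv0 : c / v0 = Q ^ 2 / (Q + 1) ^ 2 := by
    rw [hc, hv0]
    field_simp
  have hkey : T ≤ Real.exp (Q ^ 2 / (Q + 1) ^ 2) * (4 / ((Q + 1) ^ 2 * δ ^ 2)) := by
    have := hTle.trans hmono
    rw [hcv0] at this
    have : Real.exp (Q ^ 2 / (Q + 1) ^ 2) * (1 / v0) =
        Real.exp (Q ^ 2 / (Q + 1) ^ 2) * (4 / ((Q + 1) ^ 2 * δ ^ 2)) := by
      rw [hv0]
      congr 1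
      field_simp
    rw [← this]
    have := hTle.trans hmono
    rwa [hcv0] at this
  -- so δ² * T ≤ 4 exp(...) / (Q+1)²
  have hsq : δ ^ 2 * T ≤ (2 * Real.exp (Q ^ 2 / (2 * (Q + 1) ^ 2)) / ((Q + 1) * Real.sqrt T)) ^ 2 * T := by
    have hrhs : (2 * Real.exp (Q ^ 2 / (2 * (Q + 1) ^ 2)) / ((Q + 1) * Real.sqrt T)) ^ 2 * T =
        Real.exp (Q ^ 2 / (Q + 1) ^ 2) * (4 / (Q + 1) ^ 2) := by
      have hsT : Real.sqrt T ^ 2 = T := Real.sq_sqrt hT0.le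
      have hexp : Real.exp (Q ^ 2 / (2 * (Q + 1) ^ 2)) ^ 2 = Real.exp (Q ^ 2 / (Q + 1) ^ 2) := by
        rw [← Real.exp_nat_mul]
        congr 1
        field_simp
        ring
      have hsT0 : (0:ℝ) < Real.sqrt T := Real.sqrt_pos.2 hT0
      field_simp
      rw [hexp]
      rw [hsT]
      ring
    rw [hrhs]
    have hδ2 : (0:ℝ) < δ ^ 2 := by positivity
    calc δ ^ 2 * T ≤ δ ^ 2 * (Real.exp (Q ^ 2 / (Q + 1) ^ 2) * (4 / ((Q + 1) ^ 2 * δ ^ 2))) :=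
          mul_le_mul_of_nonneg_left hkey hδ2.le
      _ = Real.exp (Q ^ 2 / (Q + 1) ^ 2) * (4 / (Q + 1) ^ 2) := by
          field_simp
  have hδT : δ ^ 2 ≤ (2 * Real.exp (Q ^ 2 / (2 * (Q + 1) ^ 2)) / ((Q + 1) * Real.sqrt T)) ^ 2 :=
    le_of_mul_le_mul_right hsq hT0
  have hRpos : 0 < 2 * Real.exp (Q ^ 2 / (2 * (Q + 1) ^ 2)) / ((Q + 1) * Real.sqrt T) := by
    have : (0:ℝ) < Real.sqrt T := Real.sqrt_pos.2 hT0
    positivity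
  exact (pow_le_pow_iff_left₀ hδ.le hRpos.le (by norm_num)).1 hδT
end
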